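/- Dyadic multiplier bound for the bilinear estimate: assume 0 < δ ≤ 1, 2m > 2 - δ, and 1/2 < b < min{1, (2m - 1/2)/(2m - δ + 1)}. Then there exist ε ∈ (0, 1/2) and C > 0 such that the following holds. Let N₁, N₂, N₃, L₁, L₂, L₃ be dyadic numbers (powers of 2, ≥ 1), let k₁, k₂, k₃ ∈ ℤ \ {0} with k₁ + k₂ + k₃ = 0 and τ₁, τ₂, τ₃ ∈ ℝ with τ₁ + τ₂ + τ₃ = 0, and suppose for each j: |k_j| ≤ 2 if N_j = 1 and N_j/2 < |k_j| < 2N_j if N_j ≥ 2; and |(τ_j - λ_{k_j})/⟨k_j⟩^δ| ≤ 2 if L_j = 1 and L_j/2 < |(τ_j - λ_{k_j})/⟨k_j⟩^δ| < 2L_j if L_j ≥ 2. Then there exist j₁ ∈ {1, 2, 3} and b' with 1/2 < b' ≤ b such that N₃^{1 - δ(b - 1/2) - 1 + b + ε} / (N₁^{δ/2}·N₂^{δ/2}·L₁^b·L₂^b·L₃^{1-b-ε}) ≤ C / (N_min^{1/2+ε}·N_{j₁}^{δ/2}·L_{j₁}^{b'}·L_max^ε), where N_min := min{N₁, N₂,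 N₃} and L_max := max{L₁, L₂, L₃}. -/

import Mathlib

/-- The Japanese bracket `⟨x⟩ = (1 + |x|²)^{1/2}`. -/
noncomputable def jbr (x : ℝ) : ℝ := Real.sqrt (1 + x ^ 2)

/-- A dyadic real number: a power of `2` that is `≥ 1`. -/
def IsDyadic (x : ℝ) : Prop := ∃ n : ℕ, x = 2 ^ n

lemma IsDyadic.one_le {x : ℝ} (h : IsDyadic x) : 1 ≤ x := by
  obtain ⟨n, rfl⟩ := h
  exact one_le_pow₀ (by norm_num)

lemma IsDyadic.eq_one_or_two_le {x : ℝ} (h : IsDyadic x) : x = 1 ∨ 2 ≤ x := by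
  obtain ⟨n, rfl⟩ := h
  cases n with
  | zero => exact Or.inl (by norm_num)
  | succ k =>
      right
      calc (2:ℝ) = 2 ^ 1 := by norm_num
        _ ≤ 2 ^ (k+1) := pow_le_pow_right₀ (by norm_num) (by omega)

lemma D_lower (p A B : ℝ) (hp : 0 < p) (hB : 1 ≤ B) (hBA : B ≤ A) :
    2*p*B*A^(2*p) ≤ (A+B)^(2*p+1) - A^(2*p+1) - B^(2*p+1) := by
  have hA : (0:ℝ) < A := by linarith
  have hB0 : (0:ℝ) < B := by linarith
  have hq : (1:ℝ) ≤ 2*p+1 := by linarith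
  have hber : 1 + (2*p+1) * (B/A) ≤ (1 + B/A)^(2*p+1) :=
    one_add_mul_self_le_rpow_one_add (by have := div_nonneg hB0.le hA.le; linarith) hq
  have hmul : ((1+B/A)*A)^(2*p+1) = (1+B/A)^(2*p+1) * A^(2*p+1) :=
    Real.mul_rpow (by positivity) hA.le
  have hid : (1+B/A)*A = A+B := by field_simp
  have hA1 : A^(2*p+1) = A^(2*p) * A := by
    rw [Real.rpow_add hA, Real.rpow_one]
  have h2 : A^(2*p+1) + (2*p+1)*(B*A^(2*p)) ≤ (A+B)^(2*p+1) := by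
    calc A^(2*p+1) + (2*p+1)*(B*A^(2*p))
        = (1 + (2*p+1)*(B/A)) * A^(2*p+1) := by
          rw [hA1]; field_simp
      _ ≤ (1+B/A)^(2*p+1) * A^(2*p+1) :=
          mul_le_mul_of_nonneg_right hber (Real.rpow_nonneg hA.le _)
      _ = (A+B)^(2*p+1) := by rw [← hmul, hid]
  have hBpow : B^(2*p+1) ≤ B * A^(2*p) := by
    have h3 : B^(2*p) ≤ A^(2*p) := Real.rpow_le_rpow (by linarith) hBA (by positivity)
    calc B^(2*p+1) = B^(2*p) * B := by rw [Real.rpow_add hB0, Real.rpow_one]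
      _ ≤ A^(2*p) * B := mul_le_mul_of_nonneg_right h3 hB0.le
      _ = B * A^(2*p) := by ring
  linarith

lemma D_upper (p A B : ℝ) (hp : 0 < p) (hB : 0 < B) (hA : 0 < A) :
    (A+B)^(2*p+1) - A^(2*p+1) - B^(2*p+1) ≤ (2*p+1)*B*(A+B)^(2*p) := by
  have hAB : 0 < A + B := by linarith
  have hfr : B/(A+B) ≤ 1 := by rw [div_le_one hAB]; linarith
  have hber : 1 + (2*p+1)*(-(B/(A+B))) ≤ (1 + -(B/(A+B)))^(2*p+1) :=
    one_add_mul_self_le_rpow_one_add (by linarith) (by linarith)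
  have hid : 1 + -(B/(A+B)) = A/(A+B) := by field_simp; ring
  have hdiv : (A/(A+B))^(2*p+1) = A^(2*p+1)/(A+B)^(2*p+1) := Real.div_rpow hA.le hAB.le _
  have hABpow : (A+B)^(2*p+1) = (A+B)^(2*p) * (A+B) := by
    rw [Real.rpow_add hAB, Real.rpow_one]
  have h2 : (A+B)^(2*p+1) - (2*p+1)*(B*(A+B)^(2*p)) ≤ A^(2*p+1) := by
    have h := mul_le_mul_of_nonneg_right hber (Real.rpow_nonneg hAB.le (2*p+1))
    rw [hid, hdiv] at h
    have hne : (A+B)^(2*p+1) ≠ 0 := (Real.rpow_pos_of_pos hAB _).ne'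
    calc (A+B)^(2*p+1) - (2*p+1)*(B*(A+B)^(2*p))
        = (1 + (2*p+1)*(-(B/(A+B)))) * (A+B)^(2*p+1) := by
          rw [hABpow]; field_simp; ring
      _ ≤ A^(2*p+1)/(A+B)^(2*p+1) * (A+B)^(2*p+1) := h
      _ = A^(2*p+1) := by field_simp
  have hBq : 0 < B^(2*p+1) := Real.rpow_pos_of_pos hB _
  linarith

noncomputable def resf (α β μ m r x : ℝ) : ℝ :=
  -β * x * |x| ^ (2*m) + α * x * |x| ^ (2*r) - 2*μ*x

lemma res_core (α β m r K A B : ℝ) (hα : 0 < α) (hβ : 0 < β) (hm : 1/2 < m)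
    (hr : 0 < r) (hrm : r < m) (hK1 : 1 ≤ K)
    (hKprop : α*(2*r+1)*(4:ℝ)^(r:ℝ) ≤ m*β*K^(2*m-2*r))
    (hB : 1 ≤ B) (hBA : B ≤ A) (hKA : K ≤ A) :
    m*β*B*A^(2*m) ≤ β*((A+B)^(2*m+1) - A^(2*m+1) - B^(2*m+1))
      - α*((A+B)^(2*r+1) - A^(2*r+1) - B^(2*r+1)) := by
  have hA : (0:ℝ) < A := by linarith
  have h1 := D_lower m A B (by linarith) hB hBA
  have h2 := D_upper r A B hr (by linarith) hA
  have h3 : (A+B)^(2*r) ≤ (4:ℝ)^(r:ℝ) * A^(2*r) := by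
    have h4 : (A+B)^(2*r) ≤ (2*A)^(2*r) :=
      Real.rpow_le_rpow (by linarith) (by linarith) (by positivity)
    have h5 : (2*A)^(2*r) = (2:ℝ)^(2*r) * A^(2*r) := Real.mul_rpow (by norm_num) hA.le
    have h22 : (2:ℝ)^(2:ℝ) = 4 := by
      have h := Real.rpow_natCast (2:ℝ) 2
      norm_num at h; linarith
    have h6 : (2:ℝ)^(2*r) = (4:ℝ)^(r:ℝ) := by
      rw [Real.rpow_mul (by norm_num : (0:ℝ) ≤ 2) 2 r, h22]
    rw [h5, h6] at h4; exact h4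
  have hAsplit : A^(2*m-2*r) * A^(2*r) = A^(2*m) := by
    rw [← Real.rpow_add hA]; ring_nf
  have hKA' : K^(2*m-2*r) ≤ A^(2*m-2*r) :=
    Real.rpow_le_rpow (by linarith) hKA (by linarith)
  have hkey : α*((2*r+1)*B*((4:ℝ)^(r:ℝ)*A^(2*r))) ≤ m*β*B*A^(2*m) := by
    have hstep : α*(2*r+1)*(4:ℝ)^(r:ℝ) * (B*A^(2*r)) ≤ (m*β*A^(2*m-2*r)) * (B*A^(2*r)) := by
      apply mul_le_mul_of_nonneg_right _ (by positivity)
      calc α*(2*r+1)*(4:ℝ)^(r:ℝ) ≤ m*β*K^(2*m-2*r) := hKprop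
        _ ≤ m*β*A^(2*m-2*r) := by
            apply mul_le_mul_of_nonneg_left hKA' (by positivity)
    calc α*((2*r+1)*B*((4:ℝ)^(r:ℝ)*A^(2*r))) = α*(2*r+1)*(4:ℝ)^(r:ℝ) * (B*A^(2*r)) := by ring
      _ ≤ (m*β*A^(2*m-2*r)) * (B*A^(2*r)) := hstep
      _ = m*β*B*(A^(2*m-2*r) * A^(2*r)) := by ring
      _ = m*β*B*A^(2*m) := by rw [hAsplit]
  have p1 : β*(2*m*B*A^(2*m)) ≤ β*((A+B)^(2*m+1) - A^(2*m+1) - B^(2*m+1)) :=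
    mul_le_mul_of_nonneg_left h1 hβ.le
  have p2 : α*((A+B)^(2*r+1) - A^(2*r+1) - B^(2*r+1)) ≤ α*((2*r+1)*B*(A+B)^(2*r)) :=
    mul_le_mul_of_nonneg_left h2 hα.le
  have p3 : α*((2*r+1)*B*(A+B)^(2*r)) ≤ α*((2*r+1)*B*((4:ℝ)^(r:ℝ)*A^(2*r))) := by
    apply mul_le_mul_of_nonneg_left _ hα.le
    apply mul_le_mul_of_nonneg_left h3 (by positivity)
  linarith

lemma res_realpos (α β μ m r K : ℝ) (hα : 0 < α) (hβ : 0 < β) (hm : 1/2 < m)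
    (hr : 0 < r) (hrm : r < m) (hK1 : 1 ≤ K)
    (hKprop : α*(2*r+1)*(4:ℝ)^(r:ℝ) ≤ m*β*K^(2*m-2*r))
    (a b c : ℝ) (hsum : a + b + c = 0) (hc1 : 1 ≤ |c|)
    (hba : |b| ≤ |a|) (hcb : |c| ≤ |b|) (hKa : 2*K ≤ |a|) (hapos : 0 < a) :
    m * β * |c| * (|a| / 2) ^ (2*m) ≤ |resf α β μ m r a + resf α β μ m r b + resf α β μ m r c| := by
  have haa : |a| = a := abs_of_pos hapos
  have hbneg : b < 0 := by
    by_contra hcon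
    push_neg at hcon
    have habsb : |b| = b := abs_of_nonneg hcon
    have hcneg0 : c < 0 := by linarith
    have habsc : |c| = a + b := by rw [abs_of_neg hcneg0]; linarith
    rw [habsb, habsc] at hcb
    linarith
  have hcneg : c < 0 := by
    rcases lt_or_ge c 0 with h | h
    · exact h
    · exfalso
      have habsc : |c| = c := abs_of_nonneg h
      have hba' : |b| ≤ a := by rwa [haa] at hba
      have hbb : -a ≤ b := (abs_le.mp hba').1
      have hc1' : 1 ≤ c := by rwa [habsc] at hc1
      linarith
  set A : ℝ := -b with hAdef
  set B : ℝ := -c with hBdef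
  have habsb : |b| = A := by rw [abs_of_neg hbneg]
  have habsc : |c| = B := by rw [abs_of_neg hcneg]
  have hea : a = A + B := by rw [hAdef, hBdef]; linarith
  have hB1 : 1 ≤ B := by rwa [habsc] at hc1
  have hBA : B ≤ A := by rw [← habsb, ← habsc]; exact hcb
  have hApos : 0 < A := by linarith
  have hABpos : 0 < A + B := by linarith
  have hKA : K ≤ A := by
    rw [haa, hea] at hKa; linarith
  have hpow : ∀ x : ℝ, 0 < x → ∀ p : ℝ, x * x^(2*p) = x^(2*p+1) := by
    intro x hx p; rw [Real.rpow_add hx, Real.rpow_one]; ring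
  have hcore := res_core α β m r K A B hα hβ hm hr hrm hK1 hKprop hB1 hBA hKA
  have hS : resf α β μ m r a + resf α β μ m r b + resf α β μ m r c
      = -(β*((A+B)^(2*m+1) - A^(2*m+1) - B^(2*m+1))
          - α*((A+B)^(2*r+1) - A^(2*r+1) - B^(2*r+1))) := by
    simp only [resf]
    have heb : b = -A := by rw [hAdef]; ring
    have hec : c = -B := by rw [hBdef]; ring
    rw [show |a| = A + B from by rw [haa, hea]]
    rw [habsb]
    rw [habsc]
    rw [hea]
    rw [heb]
    rw [hec]
    rw [← hpow (A+B) hABpos m, ← hpow A hApos m, ← hpow B (by linarith) m,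
      ← hpow (A+B) hABpos r, ← hpow A hApos r, ← hpow B (by linarith) r]
    ring
  rw [hS, abs_neg, habsc, haa, hea]
  have h1 : ((A+B)/2)^(2*m) ≤ A^(2*m) :=
    Real.rpow_le_rpow (by positivity) (by linarith) (by positivity)
  have h2 : m*β*B*((A+B)/2)^(2*m) ≤ m*β*B*A^(2*m) := by
    apply mul_le_mul_of_nonneg_left h1 (by positivity)
  have h3 := le_abs_self (β*((A+B)^(2*m+1) - A^(2*m+1) - B^(2*m+1))
          - α*((A+B)^(2*r+1) - A^(2*r+1) - B^(2*r+1)))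
  exact h2.trans (hcore.trans h3)

lemma res_real (α β μ m r K : ℝ) (hα : 0 < α) (hβ : 0 < β) (hm : 1/2 < m)
    (hr : 0 < r) (hrm : r < m) (hK1 : 1 ≤ K)
    (hKprop : α*(2*r+1)*(4:ℝ)^(r:ℝ) ≤ m*β*K^(2*m-2*r))
    (a b c : ℝ) (hsum : a + b + c = 0) (hc1 : 1 ≤ |c|)
    (hba : |b| ≤ |a|) (hcb : |c| ≤ |b|) (hKa : 2*K ≤ |a|) :
    m * β * |c| * (|a| / 2) ^ (2*m)
      ≤ |resf α β μ m r a + resf α β μ m r b + resf α β μ m r c| := by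
  have ha0 : a ≠ 0 := by
    intro h
    rw [h, abs_zero] at hKa
    linarith
  rcases ha0.lt_or_gt with h | h
  · have hres := res_realpos α β μ m r K hα hβ hm hr hrm hK1 hKprop (-a) (-b) (-c)
      (by linarith) (by rwa [abs_neg]) (by rwa [abs_neg, abs_neg])
      (by rwa [abs_neg, abs_neg]) (by rwa [abs_neg]) (by linarith)
    have hneg : ∀ x : ℝ, resf α β μ m r (-x) = -resf α β μ m r x := by
      intro x; simp only [resf, abs_neg]; ring
    rw [hneg, hneg, hneg, abs_neg, abs_neg,
      show -resf α β μ m r a + -resf α β μ m r b + -resf α β μ m r c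
        = -(resf α β μ m r a + resf α β μ m r b + resf α β μ m r c) from by ring,
      abs_neg] at hres
    exact hres
  · exact res_realpos α β μ m r K hα hβ hm hr hrm hK1 hKprop a b c hsum hc1 hba hcb hKa h

lemma res_branch (α β μ m r K Nmin Nmax : ℝ) (hα : 0 < α) (hβ : 0 < β) (hm : 1/2 < m)
    (hr : 0 < r) (hrm : r < m) (hK1 : 1 ≤ K)
    (hKprop : α*(2*r+1)*(4:ℝ)^(r:ℝ) ≤ m*β*K^(2*m-2*r))
    (a b c : ℝ) (hsum : a + b + c = 0) (hc1 : 1 ≤ |c|)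
    (hba : |b| ≤ |a|) (hcb : |c| ≤ |b|)
    (hNminc : Nmin ≤ 2*|c|) (hNmaxa : Nmax ≤ 2*|a|) (hKN : 4*K ≤ Nmax)
    (hNmin0 : 0 < Nmin) (hNmax0 : 0 < Nmax) :
    m * β * (Nmin/2) * ((Nmax/4) ^ (2*m))
      ≤ |resf α β μ m r a + resf α β μ m r b + resf α β μ m r c| := by
  have hKa : 2*K ≤ |a| := by linarith
  have h := res_real α β μ m r K hα hβ hm hr hrm hK1 hKprop a b c hsum hc1 hba hcb hKa
  have t1 : (Nmax/4:ℝ)^(2*m) ≤ (|a|/2)^(2*m) := by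
    apply Real.rpow_le_rpow (by positivity) (by linarith) (by positivity)
  have t2 : m*β*(Nmin/2) ≤ m*β*|c| := by
    apply mul_le_mul_of_nonneg_left (by linarith) (by positivity)
  calc m * β * (Nmin/2) * ((Nmax/4) ^ (2*m))
      ≤ m*β*|c| * ((Nmax/4) ^ (2*m)) := by
        apply mul_le_mul_of_nonneg_right t2 (by positivity)
    _ ≤ m*β*|c| * ((|a|/2) ^ (2*m)) := by
        apply mul_le_mul_of_nonneg_left t1 (by positivity)
    _ ≤ _ := h

lemma master_J01 (δ b m ε x2 xm xM xa xb ya yb y2 ym c5 cc : ℝ)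
    (hδ0 : 0 < δ) (hδ1 : δ ≤ 1) (hb : 1/2 < b) (hb1 : b < 1) (hm : 1/2 < m)
    (hε : 0 < ε) (hε1 : 2*ε ≤ b - 1/2) (hε2 : 2*ε ≤ 1 - b)
    (hE1 : b + ε*(1 - δ + 2*m) ≤ 2*m*b)
    (h0xm : 0 ≤ xm) (h0xM : 0 ≤ xM) (hx2M : x2 ≤ xM) (hxbM : xb ≤ xM)
    (h0ya : 0 ≤ ya) (h0yb : 0 ≤ yb) (h0y2 : 0 ≤ y2)
    (hym : ym ≤ ya + yb + y2)
    (hc5 : c5 ≤ 0) (hcc : -c5 ≤ cc)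
    (HB : c5 + xm + 2*m*xM ≤ yb + δ*xb) :
    (b + ε - δ*(b - 1/2))*x2 + (1/2 + ε)*xm + (δ/2)*xa + (b - ε)*ya + ε*ym
      ≤ cc + ((δ/2)*xa + (δ/2)*xb + b*ya + b*yb + (1 - b - ε)*y2) := by
  have hδb : δ*(b-1/2) ≤ b-1/2 := by nlinarith
  have h1 : ε*ym ≤ ε*(ya+yb+y2) := mul_le_mul_of_nonneg_left hym hε.le
  have h2 : (b-ε)*(c5 + xm + 2*m*xM) ≤ (b-ε)*(yb + δ*xb) :=
    mul_le_mul_of_nonneg_left HB (by linarith)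
  have h3 : (b + ε - δ*(b-1/2))*x2 ≤ (b + ε - δ*(b-1/2))*xM :=
    mul_le_mul_of_nonneg_left hx2M (by linarith)
  have h4 : (δ*(b-ε-1/2))*xb ≤ (δ*(b-ε-1/2))*xM :=
    mul_le_mul_of_nonneg_left hxbM (by nlinarith)
  have h5 : (1/2 + 2*ε - b)*xm ≤ 0 :=
    mul_nonpos_iff.mpr (Or.inr ⟨by linarith, h0xm⟩)
  have h6 : (b + ε - δ*ε + 2*m*ε - 2*m*b)*xM ≤ 0 :=
    mul_nonpos_iff.mpr (Or.inr ⟨by linarith, h0xM⟩)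
  have h7 : 0 ≤ (1 - b - 2*ε)*y2 := mul_nonneg (by linarith) h0y2
  have h8 : (b-ε)*(-c5) ≤ 1*(-c5) :=
    mul_le_mul_of_nonneg_right (by linarith) (by linarith)
  linarith

lemma master_J2 (δ b m ε x2 xm xM xa xb ya yb y2 ym c5 cc h8c : ℝ)
    (hδ0 : 0 < δ) (hδ1 : δ ≤ 1) (hb : 1/2 < b) (hb1 : b < 1) (hm : 1/2 < m)
    (hε : 0 < ε) (hε1 : 2*ε ≤ b - 1/2) (hε2 : 2*ε ≤ 1 - b)
    (hE2 : (b + ε - δ*(b - 1/2)) + (1-b-2*ε)*δ + 1/2 + ε ≤ δ/2 + (2*m+1)*(1-b-2*ε))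
    (h0xm : 0 ≤ xm) (h0xM : 0 ≤ xM) (hx2M : x2 ≤ xM) (hxmM : xm ≤ xM)
    (h0ya : 0 ≤ ya) (h0yb : 0 ≤ yb) (h0y2 : 0 ≤ y2)
    (hym : ym ≤ ya + yb + y2)
    (hc5 : c5 ≤ 0) (h0h8 : 0 ≤ h8c) (hxb8 : xM ≤ xb + h8c) (hcc : -c5 + h8c ≤ cc)
    (H2 : c5 + xm + 2*m*xM ≤ y2 + δ*x2) :
    (b + ε - δ*(b - 1/2))*x2 + (1/2 + ε)*xm + (δ/2)*xa + (b - ε)*ya + ε*ym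
      ≤ cc + ((δ/2)*xa + (δ/2)*xb + b*ya + b*yb + (1 - b - ε)*y2) := by
  have hδb : δ*(b-1/2) ≤ b-1/2 := by nlinarith
  have h1 : ε*ym ≤ ε*(ya+yb+y2) := mul_le_mul_of_nonneg_left hym hε.le
  have h2 : (1-b-2*ε)*(c5 + xm + 2*m*xM) ≤ (1-b-2*ε)*(y2 + δ*x2) :=
    mul_le_mul_of_nonneg_left H2 (by linarith)
  have h3 : ((b + ε - δ*(b-1/2)) + (1-b-2*ε)*δ)*x2 ≤ ((b + ε - δ*(b-1/2)) + (1-b-2*ε)*δ)*xM := by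
    apply mul_le_mul_of_nonneg_left hx2M
    nlinarith
  have h4 : (b - 1/2 + 3*ε)*xm ≤ (b - 1/2 + 3*ε)*xM :=
    mul_le_mul_of_nonneg_left hxmM (by linarith)
  have h5 : (δ/2)*xM ≤ (δ/2)*(xb + h8c) :=
    mul_le_mul_of_nonneg_left hxb8 (by linarith)
  have h6 : ((b + ε - δ*(b-1/2)) + (1-b-2*ε)*δ + (b - 1/2 + 3*ε) - δ/2 - 2*m*(1-b-2*ε))*xM ≤ 0 :=
    mul_nonpos_iff.mpr (Or.inr ⟨by linarith, h0xM⟩)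
  have h7 : ε*yb ≤ b*yb := mul_le_mul_of_nonneg_right (by linarith) h0yb
  have h8 : (1-b-2*ε)*(-c5) ≤ 1*(-c5) :=
    mul_le_mul_of_nonneg_right (by linarith) (by linarith)
  have h9 : (δ/2)*h8c ≤ 1*h8c := mul_le_mul_of_nonneg_right (by linarith) h0h8
  linarith

lemma master_small (δ b m ε x2 xm xa xb ya yb y2 ym kk cc : ℝ)
    (hδ0 : 0 < δ) (hδ1 : δ ≤ 1) (hb : 1/2 < b) (hb1 : b < 1)
    (hε : 0 < ε) (hε1 : 2*ε ≤ b - 1/2) (hε2 : 2*ε ≤ 1 - b)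
    (h0xm : 0 ≤ xm) (hx2k : x2 ≤ kk) (hxmk : xm ≤ kk) (h0kk : 0 ≤ kk)
    (h0ya : 0 ≤ ya) (h0yb : 0 ≤ yb) (h0y2 : 0 ≤ y2) (h0xb : 0 ≤ xb)
    (hym : ym ≤ ya + yb + y2) (hcc : 3*kk ≤ cc) :
    (b + ε - δ*(b - 1/2))*x2 + (1/2 + ε)*xm + (δ/2)*xa + (b - ε)*ya + ε*ym
      ≤ cc + ((δ/2)*xa + (δ/2)*xb + b*ya + b*yb + (1 - b - ε)*y2) := by
  have hδb0 : 0 ≤ δ*(b-1/2) := mul_nonneg hδ0.le (by linarith)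
  have hδb : δ*(b-1/2) ≤ b-1/2 := by nlinarith
  have h1 : ε*ym ≤ ε*(ya+yb+y2) := mul_le_mul_of_nonneg_left hym hε.le
  have h2 : ε*yb ≤ b*yb := mul_le_mul_of_nonneg_right (by linarith) h0yb
  have h3 : ε*y2 ≤ (1-b-ε)*y2 := mul_le_mul_of_nonneg_right (by linarith) h0y2
  have h4 : (b + ε - δ*(b-1/2))*x2 ≤ (b + ε - δ*(b-1/2))*kk :=
    mul_le_mul_of_nonneg_left hx2k (by linarith)
  have h5 : (1/2+ε)*xm ≤ (1/2+ε)*kk := mul_le_mul_of_nonneg_left hxmk (by linarith)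
  have h6 : (b + ε - δ*(b-1/2) + 1/2 + ε - 3)*kk ≤ 0 :=
    mul_nonpos_iff.mpr (Or.inr ⟨by linarith, h0kk⟩)
  have h7 : 0 ≤ (δ/2)*xb := mul_nonneg (by linarith) h0xb
  linarith

lemma bridge (u1 u2 u3 u4 u5 v1 v2 v3 v4 v5 C e1 e2 e3 e4 e5 f1 f2 f3 f4 f5 : ℝ)
    (hu1 : 0 < u1) (hu2 : 0 < u2) (hu3 : 0 < u3) (hu4 : 0 < u4) (hu5 : 0 < u5)
    (hv1 : 0 < v1) (hv2 : 0 < v2) (hv3 : 0 < v3) (hv4 : 0 < v4) (hv5 : 0 < v5)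
    (hC : 0 < C)
    (h : e1*Real.log u1 + e2*Real.log u2 + e3*Real.log u3 + e4*Real.log u4 + e5*Real.log u5
        ≤ Real.log C + f1*Real.log v1 + f2*Real.log v2 + f3*Real.log v3 + f4*Real.log v4
          + f5*Real.log v5) :
    u1^e1 * (u2^e2 * u3^e3 * u4^e4 * u5^e5) ≤ C * (v1^f1 * v2^f2 * v3^f3 * v4^f4 * v5^f5) := by
  have hL : Real.exp (Real.log u1 * e1 + (Real.log u2 * e2 + Real.log u3 * e3 + Real.log u4 * e4
          + Real.log u5 * e5)) = u1^e1 * (u2^e2 * u3^e3 * u4^e4 * u5^e5) := by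
    rw [Real.exp_add, Real.exp_add, Real.exp_add, Real.exp_add,
      ← Real.rpow_def_of_pos hu1, ← Real.rpow_def_of_pos hu2, ← Real.rpow_def_of_pos hu3,
      ← Real.rpow_def_of_pos hu4, ← Real.rpow_def_of_pos hu5]
  have hR : Real.exp (Real.log C + (Real.log v1 * f1 + Real.log v2 * f2 + Real.log v3 * f3
          + Real.log v4 * f4 + Real.log v5 * f5))
      = C * (v1^f1 * v2^f2 * v3^f3 * v4^f4 * v5^f5) := by
    rw [Real.exp_add, Real.exp_add, Real.exp_add, Real.exp_add, Real.exp_add, Real.exp_log hC,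
      ← Real.rpow_def_of_pos hv1, ← Real.rpow_def_of_pos hv2, ← Real.rpow_def_of_pos hv3,
      ← Real.rpow_def_of_pos hv4, ← Real.rpow_def_of_pos hv5]
  rw [← hL, ← hR]
  exact Real.exp_le_exp.mpr (by linarith)
lemma eps_choice (m δ b : ℝ) (hm : 1/2 < m) (hδ0 : 0 < δ) (hδ1 : δ ≤ 1)
    (hb1 : 1/2 < b) (hb1' : b < 1) (hb2' : b * (2*m - δ + 1) < 2*m - 1/2) :
    ∃ ε : ℝ, 0 < ε ∧ ε < 1/2 ∧ 2*ε ≤ b - 1/2 ∧ 2*ε ≤ 1 - b ∧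
      (b + ε*(1 - δ + 2*m) ≤ 2*m*b) ∧
      ((b + ε - δ*(b - 1/2)) + (1-b-2*ε)*δ + 1/2 + ε ≤ δ/2 + (2*m+1)*(1-b-2*ε)) := by
  have hnum4 : 0 < (2*m-δ+1)*(1-b) - b*(1-δ) - 1/2 := by
    have h1δ : b*(1-δ) ≤ 1*(1-δ) := mul_le_mul_of_nonneg_right hb1'.le (by linarith)
    nlinarith
  set e := min (min ((b-1/2)/2) ((1-b)/2))
      (min (b*(2*m-1)/(2*m+1-δ)) (((2*m-δ+1)*(1-b) - b*(1-δ) - 1/2)/(4+4*m-2*δ))) with hedef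
  have he1 : e ≤ (b-1/2)/2 := le_trans (min_le_left _ _) (min_le_left _ _)
  have he2 : e ≤ (1-b)/2 := le_trans (min_le_left _ _) (min_le_right _ _)
  have he3 : e ≤ b*(2*m-1)/(2*m+1-δ) := le_trans (min_le_right _ _) (min_le_left _ _)
  have he4 : e ≤ ((2*m-δ+1)*(1-b) - b*(1-δ) - 1/2)/(4+4*m-2*δ) :=
    le_trans (min_le_right _ _) (min_le_right _ _)
  have hepos : 0 < e := by
    apply lt_min (lt_min (by linarith) (by linarith))
    exact lt_min (div_pos (mul_pos (by linarith) (by linarith)) (by linarith))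
      (div_pos hnum4 (by linarith))
  refine ⟨e, hepos, by linarith, by linarith, by linarith, ?_, ?_⟩
  · have h2 := (le_div_iff₀ (by linarith : (0:ℝ) < 2*m+1-δ)).mp he3
    linarith
  · have h2 := (le_div_iff₀ (by linarith : (0:ℝ) < 4+4*m-2*δ)).mp he4
    nlinarith

lemma const_choice (α β m r : ℝ) (hα : 0 < α) (hβ : 0 < β) (hm : 1/2 < m)
    (hr : 0 < r) (hrm : r < m) :
    ∃ K c5 C : ℝ, 1 ≤ K ∧ α*(2*r+1)*(4:ℝ)^(r:ℝ) ≤ m*β*K^(2*m-2*r) ∧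
      0 < c5 ∧ Real.log c5 ≤ 0 ∧ c5 ≤ m*β/(48*(4:ℝ)^(2*m)) ∧
      0 < C ∧ -Real.log c5 ≤ Real.log C ∧ -Real.log c5 + Real.log 8 ≤ Real.log C ∧
      3*Real.log (4*K) ≤ Real.log C := by
  have hmr2 : (0:ℝ) < 2*m - 2*r := by linarith
  set K := max 1 ((α*(2*r+1)*(4:ℝ)^(r:ℝ)/(m*β))^(1/(2*m-2*r))) with hKdef
  have hK1 : (1:ℝ) ≤ K := le_max_left _ _
  have hKprop : α*(2*r+1)*(4:ℝ)^(r:ℝ) ≤ m*β*K^(2*m-2*r) := by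
    have hmb : (0:ℝ) < m*β := mul_pos (by linarith) hβ
    have hbase : (0:ℝ) ≤ α*(2*r+1)*(4:ℝ)^(r:ℝ)/(m*β) := by positivity
    have hX : ((α*(2*r+1)*(4:ℝ)^(r:ℝ)/(m*β))^(1/(2*m-2*r)))^(2*m-2*r)
        = α*(2*r+1)*(4:ℝ)^(r:ℝ)/(m*β) := by
      rw [← Real.rpow_mul hbase, one_div, inv_mul_cancel₀ hmr2.ne', Real.rpow_one]
    have hXK : ((α*(2*r+1)*(4:ℝ)^(r:ℝ)/(m*β))^(1/(2*m-2*r)))^(2*m-2*r) ≤ K^(2*m-2*r) :=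
      Real.rpow_le_rpow (Real.rpow_nonneg hbase _) (le_max_right _ _) hmr2.le
    rw [hX] at hXK
    calc α*(2*r+1)*(4:ℝ)^(r:ℝ) = m*β*(α*(2*r+1)*(4:ℝ)^(r:ℝ)/(m*β)) := by field_simp
      _ ≤ m*β*K^(2*m-2*r) := mul_le_mul_of_nonneg_left hXK hmb.le
  set c4 := m*β/(48*(4:ℝ)^(2*m)) with hc4def
  have hc4pos : 0 < c4 := div_pos (mul_pos (by linarith) hβ) (by positivity)
  set c5 := min c4 1 with hc5def
  have hc5pos : 0 < c5 := lt_min hc4pos one_pos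
  have hlogc5 : Real.log c5 ≤ 0 := Real.log_nonpos hc5pos.le (min_le_right _ _)
  have h4Kpos : (0:ℝ) < 4*K := by linarith
  have hlogC : Real.log (c5⁻¹ * 8 * (4*K)^(3:ℝ))
      = -Real.log c5 + Real.log 8 + 3*Real.log (4*K) := by
    rw [Real.log_mul (mul_ne_zero (inv_ne_zero hc5pos.ne') (by norm_num))
      (Real.rpow_pos_of_pos h4Kpos _).ne', Real.log_mul (inv_ne_zero hc5pos.ne') (by norm_num),
      Real.log_inv, Real.log_rpow h4Kpos]
  have hlog8 : (0:ℝ) ≤ Real.log 8 := Real.log_nonneg (by norm_num)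
  have hlog4K : (0:ℝ) ≤ Real.log (4*K) := Real.log_nonneg (by linarith)
  refine ⟨K, c5, c5⁻¹ * 8 * (4*K)^(3:ℝ), hK1, hKprop, hc5pos, hlogc5, min_le_left _ _, ?_, ?_, ?_, ?_⟩
  · have h1 : (0:ℝ) < (4*K)^(3:ℝ) := Real.rpow_pos_of_pos h4Kpos _
    have h2 : (0:ℝ) < c5⁻¹ := inv_pos.mpr hc5pos
    positivity
  · rw [hlogC]; linarith
  · rw [hlogC]; linarith
  · rw [hlogC]; linarith

lemma res_max (α β μ m r K Nmin Nmax : ℝ) (hα : 0 < α) (hβ : 0 < β) (hm : 1/2 < m)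
    (hr : 0 < r) (hrm : r < m) (hK1 : 1 ≤ K)
    (hKprop : α*(2*r+1)*(4:ℝ)^(r:ℝ) ≤ m*β*K^(2*m-2*r))
    (N : Fin 3 → ℝ) (k : Fin 3 → ℤ)
    (hsum3 : ((k 0 : ℤ):ℝ) + ((k 1 : ℤ):ℝ) + ((k 2 : ℤ):ℝ) = 0)
    (hkabs1 : ∀ j, (1:ℝ) ≤ |((k j : ℤ):ℝ)|)
    (hklow : ∀ j, N j ≤ 2*|((k j : ℤ):ℝ)|)
    (hNminle : ∀ j, Nmin ≤ N j)
    (hNmaxeq : Nmax = max (N 0) (max (N 1) (N 2)))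
    (hKN : 4*K ≤ Nmax) (hNminpos : 0 < Nmin) (hNmaxpos : 0 < Nmax) :
    m * β * (Nmin/2) * ((Nmax/4) ^ (2*m))
      ≤ |resf α β μ m r ((k 0 : ℤ):ℝ) + resf α β μ m r ((k 1 : ℤ):ℝ)
          + resf α β μ m r ((k 2 : ℤ):ℝ)| := by
  have hbr : ∀ ia ib ic : Fin 3,
      ((k ia : ℤ):ℝ) + ((k ib : ℤ):ℝ) + ((k ic : ℤ):ℝ) = 0 →
      |((k ib : ℤ):ℝ)| ≤ |((k ia : ℤ):ℝ)| → |((k ic : ℤ):ℝ)| ≤ |((k ib : ℤ):ℝ)| →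
      |((k 0 : ℤ):ℝ)| ≤ |((k ia : ℤ):ℝ)| → |((k 1 : ℤ):ℝ)| ≤ |((k ia : ℤ):ℝ)| →
      |((k 2 : ℤ):ℝ)| ≤ |((k ia : ℤ):ℝ)| →
      m * β * (Nmin/2) * ((Nmax/4) ^ (2*m))
        ≤ |resf α β μ m r ((k ia : ℤ):ℝ) + resf α β μ m r ((k ib : ℤ):ℝ)
            + resf α β μ m r ((k ic : ℤ):ℝ)| := by
    intro ia ib ic hs hba hcb hm0 hm1 hm2
    apply res_branch α β μ m r K Nmin Nmax hα hβ hm hr hrm hK1 hKprop _ _ _ hs (hkabs1 ic)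
      hba hcb (by linarith [hNminle ic, hklow ic]) _ hKN hNminpos hNmaxpos
    rw [hNmaxeq]
    apply max_le (by linarith [hklow 0])
      (max_le (by linarith [hklow 1]) (by linarith [hklow 2]))
  rcases le_total |((k 0 : ℤ):ℝ)| |((k 1 : ℤ):ℝ)| with h01 | h01 <;>
    rcases le_total |((k 0 : ℤ):ℝ)| |((k 2 : ℤ):ℝ)| with h02 | h02 <;>
      rcases le_total |((k 1 : ℤ):ℝ)| |((k 2 : ℤ):ℝ)| with h12 | h12
  · have h := hbr 2 1 0 (by linarith) h12 h01
      (by linarith) (by linarith) (by linarith)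
    rwa [show resf α β μ m r ((k 2 : ℤ):ℝ) + resf α β μ m r ((k 1 : ℤ):ℝ)
        + resf α β μ m r ((k 0 : ℤ):ℝ) = resf α β μ m r ((k 0 : ℤ):ℝ)
        + resf α β μ m r ((k 1 : ℤ):ℝ) + resf α β μ m r ((k 2 : ℤ):ℝ) from by ring] at h
  · have h := hbr 1 2 0 (by linarith) h12 h02
      (by linarith) (by linarith) (by linarith)
    rwa [show resf α β μ m r ((k 1 : ℤ):ℝ) + resf α β μ m r ((k 2 : ℤ):ℝ)
        + resf α β μ m r ((k 0 : ℤ):ℝ) = resf α β μ m r ((k 0 : ℤ):ℝ)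
        + resf α β μ m r ((k 1 : ℤ):ℝ) + resf α β μ m r ((k 2 : ℤ):ℝ) from by ring] at h
  · have h := hbr 1 0 2 (by linarith) h01 h02
      (by linarith) (by linarith) (by linarith)
    rwa [show resf α β μ m r ((k 1 : ℤ):ℝ) + resf α β μ m r ((k 0 : ℤ):ℝ)
        + resf α β μ m r ((k 2 : ℤ):ℝ) = resf α β μ m r ((k 0 : ℤ):ℝ)
        + resf α β μ m r ((k 1 : ℤ):ℝ) + resf α β μ m r ((k 2 : ℤ):ℝ) from by ring] at h
  · have h := hbr 1 0 2 (by linarith) h01 h02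
      (by linarith) (by linarith) (by linarith)
    rwa [show resf α β μ m r ((k 1 : ℤ):ℝ) + resf α β μ m r ((k 0 : ℤ):ℝ)
        + resf α β μ m r ((k 2 : ℤ):ℝ) = resf α β μ m r ((k 0 : ℤ):ℝ)
        + resf α β μ m r ((k 1 : ℤ):ℝ) + resf α β μ m r ((k 2 : ℤ):ℝ) from by ring] at h
  · have h := hbr 2 0 1 (by linarith) h02 h01
      (by linarith) (by linarith) (by linarith)
    rwa [show resf α β μ m r ((k 2 : ℤ):ℝ) + resf α β μ m r ((k 0 : ℤ):ℝ)
        + resf α β μ m r ((k 1 : ℤ):ℝ) = resf α β μ m r ((k 0 : ℤ):ℝ)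
        + resf α β μ m r ((k 1 : ℤ):ℝ) + resf α β μ m r ((k 2 : ℤ):ℝ) from by ring] at h
  · have h := hbr 2 0 1 (by linarith) h02 h01
      (by linarith) (by linarith) (by linarith)
    rwa [show resf α β μ m r ((k 2 : ℤ):ℝ) + resf α β μ m r ((k 0 : ℤ):ℝ)
        + resf α β μ m r ((k 1 : ℤ):ℝ) = resf α β μ m r ((k 0 : ℤ):ℝ)
        + resf α β μ m r ((k 1 : ℤ):ℝ) + resf α β μ m r ((k 2 : ℤ):ℝ) from by ring] at h
  · have h := hbr 0 2 1 (by linarith) h02 h12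
      (by linarith) (by linarith) (by linarith)
    rwa [show resf α β μ m r ((k 0 : ℤ):ℝ) + resf α β μ m r ((k 2 : ℤ):ℝ)
        + resf α β μ m r ((k 1 : ℤ):ℝ) = resf α β μ m r ((k 0 : ℤ):ℝ)
        + resf α β μ m r ((k 1 : ℤ):ℝ) + resf α β μ m r ((k 2 : ℤ):ℝ) from by ring] at h
  · exact hbr 0 1 2 (by linarith) h01 h12
      (by linarith) (by linarith) (by linarith)

set_option maxHeartbeats 2000000 in
/-- dyadic multiplier bound for the bilinear estimate.  Assume `0 < δ ≤ 1`,
`2m > 2 - δ`, `1/2 < b < min{1, (2m - 1/2)/(2m - δ + 1)}`.  Then there are `ε ∈ (0,1/2)`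
and `C > 0` such that for all dyadic `N_j, L_j` localizing the frequencies `k_j` and the
modulations `(τ_j - λ_{k_j})/⟨k_j⟩^δ` of a frequency triple (`k₁+k₂+k₃ = 0`, `k_j ≠ 0`,
`τ₁+τ₂+τ₃ = 0`), there exist `j₁` and `b' ∈ (1/2, b]` with
`N₃^{1-δ(b-1/2)-1+b+ε}/(N₁^{δ/2} N₂^{δ/2} L₁^b L₂^b L₃^{1-b-ε})
  ≤ C/(N_min^{1/2+ε} N_{j₁}^{δ/2} L_{j₁}^{b'} L_max^ε)`. -/
theorem dyadic_multiplier_bound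
    (α β μ m r δ b : ℝ) (hα : 0 < α) (hβ : 0 < β) (hm : 1 / 2 < m) (hr : 0 < r) (hrm : r < m)
    (hδ0 : 0 < δ) (hδ1 : δ ≤ 1) (h2m : 2 * m > 2 - δ)
    (hb1 : 1 / 2 < b) (hb2 : b < min 1 ((2 * m - 1 / 2) / (2 * m - δ + 1)))
    (lam : ℤ → ℝ)
    (hlam : ∀ k : ℤ, lam k =
      -β * (k : ℝ) * |(k : ℝ)| ^ (2 * m) + α * (k : ℝ) * |(k : ℝ)| ^ (2 * r) - 2 * μ * (k : ℝ)) :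
    ∃ ε : ℝ, 0 < ε ∧ ε < 1 / 2 ∧ ∃ C > 0,
      ∀ (N L : Fin 3 → ℝ) (k : Fin 3 → ℤ) (τ : Fin 3 → ℝ),
        (∀ j, IsDyadic (N j)) → (∀ j, IsDyadic (L j)) →
        (∀ j, k j ≠ 0) → (∑ j, k j) = 0 → (∑ j, τ j) = 0 →
        (∀ j, (N j = 1 → |((k j : ℤ) : ℝ)| ≤ 2) ∧
          (2 ≤ N j → N j / 2 < |((k j : ℤ) : ℝ)| ∧ |((k j : ℤ) : ℝ)| < 2 * N j)) →
        (∀ j, (L j = 1 → |(τ j - lam (k j)) / jbr ((k j : ℤ) : ℝ) ^ δ| ≤ 2) ∧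
          (2 ≤ L j → L j / 2 < |(τ j - lam (k j)) / jbr ((k j : ℤ) : ℝ) ^ δ| ∧
            |(τ j - lam (k j)) / jbr ((k j : ℤ) : ℝ) ^ δ| < 2 * L j)) →
        ∃ j₁ : Fin 3, ∃ b' : ℝ, 1 / 2 < b' ∧ b' ≤ b ∧
          N 2 ^ (1 - δ * (b - 1 / 2) - 1 + b + ε) /
              (N 0 ^ (δ / 2) * N 1 ^ (δ / 2) * L 0 ^ b * L 1 ^ b * L 2 ^ (1 - b - ε))
            ≤ C / (min (N 0) (min (N 1) (N 2)) ^ (1 / 2 + ε) * N j₁ ^ (δ / 2)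
                * L j₁ ^ b' * max (L 0) (max (L 1) (L 2)) ^ ε) := by
  -- parameter facts
  have hb1' : b < 1 := (lt_min_iff.mp hb2).1
  have hden : (0:ℝ) < 2*m - δ + 1 := by linarith
  have hb2' : b * (2*m - δ + 1) < 2*m - 1/2 := (lt_div_iff₀ hden).mp (lt_min_iff.mp hb2).2
  obtain ⟨ε, hεpos, hεhalf, hεe1, hεe2, hE1, hE2⟩ :=
    eps_choice m δ b hm hδ0 hδ1 hb1 hb1' hb2'
  obtain ⟨K, c5, C, hK1, hKprop, hc5pos, hlogc5, hc5c4, hCpos, hccJ01, hccJ2, hccK⟩ :=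
    const_choice α β m r hα hβ hm hr hrm
  refine ⟨ε, hεpos, hεhalf, C, hCpos, ?_⟩
  intro N L k τ hNdy hLdy hk0 hksum hτsum hNloc hLloc
  rw [Fin.sum_univ_three] at hksum hτsum
  -- basic facts
  have hN1 : ∀ j, (1:ℝ) ≤ N j := fun j => (hNdy j).one_le
  have hL1 : ∀ j, (1:ℝ) ≤ L j := fun j => (hLdy j).one_le
  have hNpos : ∀ j, (0:ℝ) < N j := fun j => lt_of_lt_of_le one_pos (hN1 j)
  have hLpos : ∀ j, (0:ℝ) < L j := fun j => lt_of_lt_of_le one_pos (hL1 j)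
  have hkabs1 : ∀ j, (1:ℝ) ≤ |((k j : ℤ) : ℝ)| := by
    intro j
    have h := Int.one_le_abs (hk0 j)
    calc (1:ℝ) = ((1:ℤ):ℝ) := by norm_num
      _ ≤ ((|k j|:ℤ):ℝ) := by exact_mod_cast h
      _ = |((k j : ℤ):ℝ)| := by push_cast; ring
  have hkup : ∀ j, |((k j : ℤ):ℝ)| ≤ 2*N j := by
    intro j
    rcases (hNdy j).eq_one_or_two_le with h|h
    · have h2 := (hNloc j).1 h; rw [h]; linarith
    · exact ((hNloc j).2 h).2.le
  have hklow : ∀ j, N j ≤ 2*|((k j : ℤ):ℝ)| := by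
    intro j
    rcases (hNdy j).eq_one_or_two_le with h|h
    · rw [h]; linarith [hkabs1 j]
    · linarith [((hNloc j).2 h).1]
  have hmod : ∀ j, |τ j - lam (k j)| ≤ 8*(L j * N j ^ δ) := by
    intro j
    have hjbrpos : 0 < jbr ((k j : ℤ):ℝ) := Real.sqrt_pos.mpr (by positivity)
    have hjp : 0 < jbr ((k j : ℤ):ℝ) ^ δ := Real.rpow_pos_of_pos hjbrpos _
    have h2L : |(τ j - lam (k j)) / jbr ((k j : ℤ):ℝ) ^ δ| ≤ 2*L j := by
      rcases (hLdy j).eq_one_or_two_le with h|h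
      · have h2 := (hLloc j).1 h; rw [h]; linarith [h2]
      · linarith [((hLloc j).2 h).2]
    rw [abs_div, abs_of_pos hjp, div_le_iff₀ hjp] at h2L
    have hjbr_le : jbr ((k j : ℤ):ℝ) ≤ 2*|((k j : ℤ):ℝ)| := by
      have h1 : (1:ℝ) + ((k j : ℤ):ℝ)^2 ≤ (2*|((k j : ℤ):ℝ)|)^2 := by
        have h2 := hkabs1 j
        have hsq : |((k j : ℤ):ℝ)|^2 = ((k j : ℤ):ℝ)^2 := sq_abs _
        nlinarith [h2, hsq]
      calc jbr ((k j : ℤ):ℝ) = Real.sqrt (1 + ((k j : ℤ):ℝ)^2) := rfl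
        _ ≤ Real.sqrt ((2*|((k j : ℤ):ℝ)|)^2) := Real.sqrt_le_sqrt h1
        _ = 2*|((k j : ℤ):ℝ)| := Real.sqrt_sq (by positivity)
    have hjd : jbr ((k j : ℤ):ℝ) ^ δ ≤ 4*(N j)^δ := by
      calc jbr ((k j : ℤ):ℝ) ^ δ ≤ (4*N j)^δ := by
            apply Real.rpow_le_rpow (Real.sqrt_nonneg _) _ hδ0.le
            calc jbr ((k j : ℤ):ℝ) ≤ 2*|((k j : ℤ):ℝ)| := hjbr_le
              _ ≤ 4*N j := by linarith [hkup j]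
        _ = (4:ℝ)^δ * (N j)^δ := Real.mul_rpow (by norm_num) (hNpos j).le
        _ ≤ 4*(N j)^δ := by
            have h4 : (4:ℝ)^δ ≤ 4 := by
              calc (4:ℝ)^δ ≤ (4:ℝ)^(1:ℝ) := Real.rpow_le_rpow_of_exponent_le (by norm_num) hδ1
                _ = 4 := Real.rpow_one _
            exact mul_le_mul_of_nonneg_right h4 (Real.rpow_nonneg (hNpos j).le _)
    calc |τ j - lam (k j)| ≤ 2*L j * jbr ((k j : ℤ):ℝ) ^ δ := h2L
      _ ≤ 2*L j * (4*(N j)^δ) := by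
          apply mul_le_mul_of_nonneg_left hjd (by linarith [hLpos j])
      _ = 8*(L j * N j^δ) := by ring
  -- min / max quantities
  set Nmin := min (N 0) (min (N 1) (N 2)) with hNmindef
  set Lmax := max (L 0) (max (L 1) (L 2)) with hLmaxdef
  have hNminle : ∀ j, Nmin ≤ N j := by
    intro j; fin_cases j
    · exact min_le_left _ _
    · exact le_trans (min_le_right _ _) (min_le_left _ _)
    · exact le_trans (min_le_right _ _) (min_le_right _ _)
  have hNmaxge0 : N 0 ≤ max (N 0) (max (N 1) (N 2)) := le_max_left _ _
  have hNmaxge1 : N 1 ≤ max (N 0) (max (N 1) (N 2)) :=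
    le_trans (le_max_left _ _) (le_max_right _ _)
  have hNmaxge2 : N 2 ≤ max (N 0) (max (N 1) (N 2)) :=
    le_trans (le_max_right _ _) (le_max_right _ _)
  have hLmaxge : ∀ j, L j ≤ Lmax := by
    intro j; fin_cases j
    · exact le_max_left _ _
    · exact le_trans (le_max_left _ _) (le_max_right _ _)
    · exact le_trans (le_max_right _ _) (le_max_right _ _)
  have hNmin1 : (1:ℝ) ≤ Nmin := le_min (hN1 0) (le_min (hN1 1) (hN1 2))
  have hNminpos : (0:ℝ) < Nmin := lt_of_lt_of_le one_pos hNmin1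
  have hNmaxpos : (0:ℝ) < max (N 0) (max (N 1) (N 2)) :=
    lt_of_lt_of_le (hNpos 0) hNmaxge0
  have hLmax1 : (1:ℝ) ≤ Lmax := le_trans (hL1 0) (hLmaxge 0)
  have hLmaxpos : (0:ℝ) < Lmax := lt_of_lt_of_le one_pos hLmax1
  have hlogN : ∀ j, 0 ≤ Real.log (N j) := fun j => Real.log_nonneg (hN1 j)
  have hlogL : ∀ j, 0 ≤ Real.log (L j) := fun j => Real.log_nonneg (hL1 j)
  have hlogNmin : 0 ≤ Real.log Nmin := Real.log_nonneg hNmin1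
  have hlogNmax : 0 ≤ Real.log (max (N 0) (max (N 1) (N 2))) :=
    Real.log_nonneg (le_trans (hN1 0) hNmaxge0)
  have hx2M : Real.log (N 2) ≤ Real.log (max (N 0) (max (N 1) (N 2))) :=
    Real.log_le_log (hNpos 2) hNmaxge2
  have hx0M : Real.log (N 0) ≤ Real.log (max (N 0) (max (N 1) (N 2))) :=
    Real.log_le_log (hNpos 0) hNmaxge0
  have hx1M : Real.log (N 1) ≤ Real.log (max (N 0) (max (N 1) (N 2))) :=
    Real.log_le_log (hNpos 1) hNmaxge1
  have hxmM : Real.log Nmin ≤ Real.log (max (N 0) (max (N 1) (N 2))) :=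
    Real.log_le_log hNminpos (le_trans (hNminle 0) hNmaxge0)
  have hymsum : Real.log Lmax ≤ Real.log (L 0) + Real.log (L 1) + Real.log (L 2) := by
    have h3 : Lmax = L 0 ∨ Lmax = L 1 ∨ Lmax = L 2 := by
      rcases max_choice (L 0) (max (L 1) (L 2)) with h|h
      · exact Or.inl h
      · rcases max_choice (L 1) (L 2) with h'|h'
        · exact Or.inr (Or.inl (h.trans h'))
        · exact Or.inr (Or.inr (h.trans h'))
    rcases h3 with h|h|h <;> rw [h] <;> linarith [hlogL 0, hlogL 1, hlogL 2]
  -- denominators positive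
  have hdenL : 0 < N 0 ^ (δ/2) * N 1 ^ (δ/2) * L 0 ^ b * L 1 ^ b * L 2 ^ (1-b-ε) :=
    mul_pos (mul_pos (mul_pos (mul_pos (Real.rpow_pos_of_pos (hNpos 0) _)
      (Real.rpow_pos_of_pos (hNpos 1) _)) (Real.rpow_pos_of_pos (hLpos 0) _))
      (Real.rpow_pos_of_pos (hLpos 1) _)) (Real.rpow_pos_of_pos (hLpos 2) _)
  have hbp1 : 1/2 < b - ε := by linarith
  have hbp2 : b - ε ≤ b := by linarith
  by_cases hsmall : max (N 0) (max (N 1) (N 2)) < 4*K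
  · -- small frequency case
    have hx2k : Real.log (N 2) ≤ Real.log (4*K) :=
      Real.log_le_log (hNpos 2) (by linarith only [hNmaxge2, hsmall])
    have hxmk : Real.log Nmin ≤ Real.log (4*K) :=
      Real.log_le_log hNminpos (by linarith only [hNminle 0, hNmaxge0, hsmall])
    have hlog4K : (0:ℝ) ≤ Real.log (4*K) := Real.log_nonneg (by linarith only [hK1])
    refine ⟨0, b - ε, hbp1, hbp2, ?_⟩
    rw [div_le_div_iff₀ hdenL (mul_pos (mul_pos (mul_pos (Real.rpow_pos_of_pos hNminpos _)
        (Real.rpow_pos_of_pos (hNpos 0) _)) (Real.rpow_pos_of_pos (hLpos 0) _))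
        (Real.rpow_pos_of_pos hLmaxpos _))]
    apply bridge _ _ _ _ _ _ _ _ _ _ _ _ _ _ _ _ _ _ _ _ _ (hNpos 2) hNminpos (hNpos 0)
      (hLpos 0) hLmaxpos (hNpos 0) (hNpos 1) (hLpos 0) (hLpos 1) (hLpos 2) hCpos
    have hms := master_small δ b m ε (Real.log (N 2)) (Real.log Nmin) (Real.log (N 0))
      (Real.log (N 1)) (Real.log (L 0)) (Real.log (L 1)) (Real.log (L 2)) (Real.log Lmax)
      (Real.log (4*K)) (Real.log C) hδ0 hδ1 hb1 hb1' hεpos hεe1 hεe2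
      hlogNmin hx2k hxmk hlog4K (hlogL 0) (hlogL 1) (hlogL 2) (hlogN 1) hymsum hccK
    linarith only [hms]
  · push_neg at hsmall
    -- resonance lower bound on the maximal modulation
    have hsum3 : ((k 0 : ℤ):ℝ) + ((k 1 : ℤ):ℝ) + ((k 2 : ℤ):ℝ) = 0 := by exact_mod_cast hksum
    have hres := res_max α β μ m r K Nmin (max (N 0) (max (N 1) (N 2))) hα hβ hm hr hrm hK1
      hKprop N k hsum3 hkabs1 hklow hNminle rfl hsmall hNminpos hNmaxpos
    have hlamres : ∀ kk : ℤ, lam kk = resf α β μ m r ((kk : ℤ):ℝ) := by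
      intro kk; rw [hlam]; rfl
    have habssum : |resf α β μ m r ((k 0 : ℤ):ℝ) + resf α β μ m r ((k 1 : ℤ):ℝ)
        + resf α β μ m r ((k 2 : ℤ):ℝ)|
        ≤ 8*(L 0 * N 0^δ) + 8*(L 1 * N 1^δ) + 8*(L 2 * N 2^δ) := by
      have he : resf α β μ m r ((k 0 : ℤ):ℝ) + resf α β μ m r ((k 1 : ℤ):ℝ)
          + resf α β μ m r ((k 2 : ℤ):ℝ)
          = -((τ 0 - lam (k 0)) + (τ 1 - lam (k 1)) + (τ 2 - lam (k 2))) := by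
        rw [← hlamres, ← hlamres, ← hlamres]; linarith only [hτsum]
      rw [he, abs_neg]
      calc |(τ 0 - lam (k 0)) + (τ 1 - lam (k 1)) + (τ 2 - lam (k 2))|
          ≤ |τ 0 - lam (k 0)| + |τ 1 - lam (k 1)| + |τ 2 - lam (k 2)| := abs_add_three _ _ _
        _ ≤ _ := by linarith only [hmod 0, hmod 1, hmod 2]
    obtain ⟨js, hjs0, hjs1, hjs2⟩ : ∃ js : Fin 3, L 0*N 0^δ ≤ L js*N js^δ
        ∧ L 1*N 1^δ ≤ L js*N js^δ ∧ L 2*N 2^δ ≤ L js*N js^δ := by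
      rcases le_total (L 0*N 0^δ) (L 1*N 1^δ) with h01 | h01 <;>
        rcases le_total (L 0*N 0^δ) (L 2*N 2^δ) with h02 | h02 <;>
          rcases le_total (L 1*N 1^δ) (L 2*N 2^δ) with h12 | h12
      · exact ⟨2, by refine ⟨by linarith, by linarith, by linarith⟩⟩
      · exact ⟨1, by refine ⟨by linarith, by linarith, by linarith⟩⟩
      · exact ⟨2, by refine ⟨by linarith, by linarith, by linarith⟩⟩
      · exact ⟨1, by refine ⟨by linarith, by linarith, by linarith⟩⟩
      · exact ⟨2, by refine ⟨by linarith, by linarith, by linarith⟩⟩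
      · exact ⟨2, by refine ⟨by linarith, by linarith, by linarith⟩⟩
      · exact ⟨0, by refine ⟨by linarith, by linarith, by linarith⟩⟩
      · exact ⟨0, by refine ⟨by linarith, by linarith, by linarith⟩⟩
    have hc5chain : c5 * (Nmin * (max (N 0) (max (N 1) (N 2)))^(2*m)) ≤ L js * N js^δ := by
      have h44 : ((max (N 0) (max (N 1) (N 2)))/4:ℝ)^(2*m)
          = (max (N 0) (max (N 1) (N 2)))^(2*m)/(4:ℝ)^(2*m) :=
        Real.div_rpow hNmaxpos.le (by norm_num) _
      have h4pos : (0:ℝ) < (4:ℝ)^(2*m) := Real.rpow_pos_of_pos (by norm_num) _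
      have e1 : (m*β/(48*(4:ℝ)^(2*m))) * (Nmin * (max (N 0) (max (N 1) (N 2)))^(2*m))
          = (m*β*(Nmin/2)*(((max (N 0) (max (N 1) (N 2)))/4)^(2*m)))/24 := by
        rw [h44]; field_simp; ring
      have e2 : c5*(Nmin*(max (N 0) (max (N 1) (N 2)))^(2*m))
          ≤ (m*β/(48*(4:ℝ)^(2*m)))*(Nmin*(max (N 0) (max (N 1) (N 2)))^(2*m)) :=
        mul_le_mul_of_nonneg_right hc5c4 (by positivity)
      have e3 : m*β*(Nmin/2)*(((max (N 0) (max (N 1) (N 2)))/4)^(2*m)) ≤ 24*(L js*N js^δ) := by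
        linarith only [hres, habssum, hjs0, hjs1, hjs2]
      linarith only [e1, e2, e3]
    have hRESlog : Real.log c5 + Real.log Nmin + 2*m*Real.log (max (N 0) (max (N 1) (N 2)))
        ≤ Real.log (L js) + δ*Real.log (N js) := by
      have h := Real.log_le_log
        (mul_pos hc5pos (mul_pos hNminpos (Real.rpow_pos_of_pos hNmaxpos _))) hc5chain
      rw [Real.log_mul hc5pos.ne' (mul_pos hNminpos (Real.rpow_pos_of_pos hNmaxpos _)).ne',
        Real.log_mul hNminpos.ne' (Real.rpow_pos_of_pos hNmaxpos _).ne',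
        Real.log_rpow hNmaxpos,
        Real.log_mul (hLpos js).ne' (Real.rpow_pos_of_pos (hNpos js) _).ne',
        Real.log_rpow (hNpos js)] at h
      linarith only [h]
    clear hres habssum hlamres hmod hNloc hLloc hNdy hLdy hksum hτsum hk0 hjs0 hjs1 hjs2
    clear hkabs1 hc5chain
    have hjs3 : js = 0 ∨ js = 1 ∨ js = 2 := by
      fin_cases js
      · exact Or.inl rfl
      · exact Or.inr (Or.inl rfl)
      · exact Or.inr (Or.inr rfl)
    rcases hjs3 with rfl | rfl | rfl
    · -- modulation max at index 0 : take j₁ = 1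
      refine ⟨1, b - ε, hbp1, hbp2, ?_⟩
      rw [div_le_div_iff₀ hdenL (mul_pos (mul_pos (mul_pos (Real.rpow_pos_of_pos hNminpos _)
          (Real.rpow_pos_of_pos (hNpos 1) _)) (Real.rpow_pos_of_pos (hLpos 1) _))
          (Real.rpow_pos_of_pos hLmaxpos _))]
      apply bridge _ _ _ _ _ _ _ _ _ _ _ _ _ _ _ _ _ _ _ _ _ (hNpos 2) hNminpos (hNpos 1)
        (hLpos 1) hLmaxpos (hNpos 0) (hNpos 1) (hLpos 0) (hLpos 1) (hLpos 2) hCpos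
      have hmj := master_J01 δ b m ε (Real.log (N 2)) (Real.log Nmin)
        (Real.log (max (N 0) (max (N 1) (N 2))))
        (Real.log (N 1)) (Real.log (N 0)) (Real.log (L 1)) (Real.log (L 0)) (Real.log (L 2))
        (Real.log Lmax) (Real.log c5) (Real.log C) hδ0 hδ1 hb1 hb1' hm hεpos hεe1
        hεe2 hE1 hlogNmin hlogNmax hx2M hx0M (hlogL 1) (hlogL 0) (hlogL 2)
        (by linarith only [hymsum]) hlogc5 hccJ01 (by linarith only [hRESlog])
      linarith only [hmj]
    · -- modulation max at index 1 : take j₁ = 0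
      refine ⟨0, b - ε, hbp1, hbp2, ?_⟩
      rw [div_le_div_iff₀ hdenL (mul_pos (mul_pos (mul_pos (Real.rpow_pos_of_pos hNminpos _)
          (Real.rpow_pos_of_pos (hNpos 0) _)) (Real.rpow_pos_of_pos (hLpos 0) _))
          (Real.rpow_pos_of_pos hLmaxpos _))]
      apply bridge _ _ _ _ _ _ _ _ _ _ _ _ _ _ _ _ _ _ _ _ _ (hNpos 2) hNminpos (hNpos 0)
        (hLpos 0) hLmaxpos (hNpos 0) (hNpos 1) (hLpos 0) (hLpos 1) (hLpos 2) hCpos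
      have hmj := master_J01 δ b m ε (Real.log (N 2)) (Real.log Nmin)
        (Real.log (max (N 0) (max (N 1) (N 2))))
        (Real.log (N 0)) (Real.log (N 1)) (Real.log (L 0)) (Real.log (L 1)) (Real.log (L 2))
        (Real.log Lmax) (Real.log c5) (Real.log C) hδ0 hδ1 hb1 hb1' hm hεpos hεe1
        hεe2 hE1 hlogNmin hlogNmax hx2M hx1M (hlogL 0) (hlogL 1) (hlogL 2)
        (by linarith only [hymsum]) hlogc5 hccJ01 (by linarith only [hRESlog])
      linarith only [hmj]
    · -- modulation max at index 2
      have hk2abs : |((k 2 : ℤ):ℝ)| ≤ |((k 0 : ℤ):ℝ)| + |((k 1 : ℤ):ℝ)| := by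
        have he : ((k 2 : ℤ):ℝ) = -(((k 0 : ℤ):ℝ) + ((k 1 : ℤ):ℝ)) := by
          linarith only [hsum3]
        rw [he, abs_neg]; exact abs_add_le _ _
      rcases le_total (N 0) (N 1) with hN01 | hN01
      · -- N 0 ≤ N 1 : take j₁ = 0, use N 1 as the large frequency
        have h8 : max (N 0) (max (N 1) (N 2)) ≤ 8*N 1 :=
          max_le (by linarith only [hN01, hN1 1]) (max_le (by linarith only [hN1 1])
            (by linarith only [hkup 0, hkup 1, hklow 2, hk2abs, hN01]))
        have hxb8 : Real.log (max (N 0) (max (N 1) (N 2)))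
            ≤ Real.log (N 1) + Real.log 8 := by
          calc Real.log (max (N 0) (max (N 1) (N 2))) ≤ Real.log (8*N 1) :=
              Real.log_le_log hNmaxpos h8
            _ = Real.log 8 + Real.log (N 1) := Real.log_mul (by norm_num) (hNpos 1).ne'
            _ = Real.log (N 1) + Real.log 8 := by ring
        refine ⟨0, b - ε, hbp1, hbp2, ?_⟩
        rw [div_le_div_iff₀ hdenL (mul_pos (mul_pos (mul_pos (Real.rpow_pos_of_pos hNminpos _)
            (Real.rpow_pos_of_pos (hNpos 0) _)) (Real.rpow_pos_of_pos (hLpos 0) _))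
            (Real.rpow_pos_of_pos hLmaxpos _))]
        apply bridge _ _ _ _ _ _ _ _ _ _ _ _ _ _ _ _ _ _ _ _ _ (hNpos 2) hNminpos (hNpos 0)
          (hLpos 0) hLmaxpos (hNpos 0) (hNpos 1) (hLpos 0) (hLpos 1) (hLpos 2) hCpos
        have hmj := master_J2 δ b m ε (Real.log (N 2)) (Real.log Nmin)
          (Real.log (max (N 0) (max (N 1) (N 2))))
          (Real.log (N 0)) (Real.log (N 1)) (Real.log (L 0)) (Real.log (L 1)) (Real.log (L 2))
          (Real.log Lmax) (Real.log c5) (Real.log C) (Real.log 8) hδ0 hδ1 hb1 hb1' hm hεpos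
          hεe1 hεe2 hE2 hlogNmin hlogNmax hx2M hxmM (hlogL 0) (hlogL 1)
          (hlogL 2) (by linarith only [hymsum]) hlogc5
          (Real.log_nonneg (by norm_num)) hxb8 hccJ2 (by linarith only [hRESlog])
        linarith only [hmj]
      · -- N 1 ≤ N 0 : take j₁ = 1, use N 0 as the large frequency
        have h8 : max (N 0) (max (N 1) (N 2)) ≤ 8*N 0 :=
          max_le (by linarith only [hN1 0]) (max_le (by linarith only [hN01, hN1 0])
            (by linarith only [hkup 0, hkup 1, hklow 2, hk2abs, hN01]))
        have hxb8 : Real.log (max (N 0) (max (N 1) (N 2)))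
            ≤ Real.log (N 0) + Real.log 8 := by
          calc Real.log (max (N 0) (max (N 1) (N 2))) ≤ Real.log (8*N 0) :=
              Real.log_le_log hNmaxpos h8
            _ = Real.log 8 + Real.log (N 0) := Real.log_mul (by norm_num) (hNpos 0).ne'
            _ = Real.log (N 0) + Real.log 8 := by ring
        refine ⟨1, b - ε, hbp1, hbp2, ?_⟩
        rw [div_le_div_iff₀ hdenL (mul_pos (mul_pos (mul_pos (Real.rpow_pos_of_pos hNminpos _)
            (Real.rpow_pos_of_pos (hNpos 1) _)) (Real.rpow_pos_of_pos (hLpos 1) _))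
            (Real.rpow_pos_of_pos hLmaxpos _))]
        apply bridge _ _ _ _ _ _ _ _ _ _ _ _ _ _ _ _ _ _ _ _ _ (hNpos 2) hNminpos (hNpos 1)
          (hLpos 1) hLmaxpos (hNpos 0) (hNpos 1) (hLpos 0) (hLpos 1) (hLpos 2) hCpos
        have hmj := master_J2 δ b m ε (Real.log (N 2)) (Real.log Nmin)
          (Real.log (max (N 0) (max (N 1) (N 2))))
          (Real.log (N 1)) (Real.log (N 0)) (Real.log (L 1)) (Real.log (L 0)) (Real.log (L 2))
          (Real.log Lmax) (Real.log c5) (Real.log C) (Real.log 8) hδ0 hδ1 hb1 hb1' hm hεpos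
          hεe1 hεe2 hE2 hlogNmin hlogNmax hx2M hxmM (hlogL 1) (hlogL 0)
          (hlogL 2) (by linarith only [hymsum]) hlogc5
          (Real.log_nonneg (by norm_num)) hxb8 hccJ2 (by linarith only [hRESlog])
        linarith only [hmj]
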